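/- Suppose μ_m ≠ 0 and the input layer is replaced by its Sparsity Normalized version h^0_{SN,k} = h̃^0_k · m_k · K_1 / μ_m for a fixed real constant K_1. Then for every output coordinate l, the output h^L_l is integrable and E[h^L_l] = (f_L ∘ f_{L-1} ∘ ⋯ ∘ f_1)(μ_x · K_1), where f_i(x) = σ(n_{i-1} μ_w^i x + μ_b^i). In particular, the expected output no longer depends on the mask mean μ_m (Theorem 4: Sparsity Normalization removes the variable sparsity problem for affine activations). -/

import Mathlib

open MeasureTheory ProbabilityTheory

/-- The composition `f_L ∘ ⋯ ∘ f_1` of the per-layer affine maps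
`f_{i+1}(x) = σ (n i · μw i · x + μb i)` (0-based layer indexing):
`layerComp σ n μw μb L x = (f_L ∘ ⋯ ∘ f_1) x`. -/
def layerComp (σ : ℝ → ℝ) (n : ℕ → ℕ) (μw μb : ℕ → ℝ) : ℕ → ℝ → ℝ
  | 0, x => x
  | i + 1, x => σ ((n i : ℝ) * μw i * layerComp σ n μw μb i x + μb i)

/-- Auxiliary: a.e.-modification preserves mutual independence of a real-valued family. -/
lemma iIndepFun_congr_ae {Ω ι : Type*} [MeasurableSpace Ω] {μ : Measure Ω}
    {f g : ι → Ω → ℝ} (hf : iIndepFun f μ)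
    (hfg : ∀ i, f i =ᵐ[μ] g i) : iIndepFun g μ := by
  rw [iIndepFun_iff_measure_inter_preimage_eq_mul] at hf ⊢
  intro S sets hsets
  have h1 : ∀ i ∈ S, μ (g i ⁻¹' sets i) = μ (f i ⁻¹' sets i) := by
    intro i _
    refine measure_congr (Filter.eventuallyEq_set.mpr ?_)
    filter_upwards [hfg i] with ω hω
    simp [Set.mem_preimage, hω]
  have h2 : μ (⋂ i ∈ S, g i ⁻¹' sets i) = μ (⋂ i ∈ S, f i ⁻¹' sets i) := by
    refine measure_congr (Filter.eventuallyEq_set.mpr ?_)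
    have hae : ∀ᵐ ω ∂μ, ∀ i ∈ (S : Set ι), f i ω = g i ω :=
      (ae_ball_iff S.countable_toSet).mpr fun i _ => hfg i
    filter_upwards [hae] with ω hω
    simp only [Set.mem_iInter, Set.mem_preimage]
    exact ⟨fun h i hi => (hω i hi) ▸ h i hi, fun h i hi => (hω i hi).symm ▸ h i hi⟩
  rw [h2, hf S hsets]
  exact (Finset.prod_congr rfl fun i hi => (h1 i hi).symm)

/-- Auxiliary: a member of an independent family is independent of any function
measurable with respect to the σ-algebra generated by the family on a set not
containing its index. -/
lemma indepFun_of_measurable_biSup {Ω ι : Type*} [MeasurableSpace Ω] {μ : Measure Ω}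
    [IsProbabilityMeasure μ]
    {F : ι → Ω → ℝ} (hmeas : ∀ x, Measurable (F x))
    (hindep : iIndepFun F μ)
    (x0 : ι) (S : Set ι) (hx0 : x0 ∉ S) {g : Ω → ℝ}
    (hg : Measurable[⨆ x ∈ S, MeasurableSpace.comap (F x) inferInstance] g) :
    IndepFun (F x0) g μ := by
  have hi : iIndep (fun x => MeasurableSpace.comap (F x) inferInstance) μ := hindep
  have h1 := indep_iSup_of_disjoint (fun x => (hmeas x).comap_le) hi
    (S := {x0}) (T := S) (Set.disjoint_singleton_left.mpr hx0)
  rw [iSup_singleton] at h1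
  exact indep_of_indep_of_le_right h1 hg.comap_le

/-- Auxiliary network built from an indexed family `F` of random variables
(weights, biases, features, masks) with affine layers. -/
noncomputable def netAux (σ : ℝ → ℝ) (L : ℕ) (n : ℕ → ℕ) (μm K₁ : ℝ) {Ω : Type*}
    (F : (((Σ i : Fin L, Fin (n ((i : ℕ) + 1)) × Fin (n (i : ℕ))) ⊕
      (Σ i : Fin L, Fin (n ((i : ℕ) + 1)))) ⊕ (Fin (n 0) ⊕ Fin (n 0))) → Ω → ℝ) :
    (i : ℕ) → Fin (n i) → Ω → ℝ :=
  Nat.rec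
    (fun k ω => F (Sum.inr (Sum.inl k)) ω * F (Sum.inr (Sum.inr k)) ω * K₁ / μm)
    (fun i ih j ω =>
      if hi : i < L then
        σ (∑ k, F (Sum.inl (Sum.inl ⟨⟨i, hi⟩, (j, k)⟩)) ω * ih k ω
          + F (Sum.inl (Sum.inr ⟨⟨i, hi⟩, j⟩)) ω)
      else 0)

/-- **Theorem 4 (Sparsity Normalization removes the VSP for affine activations).**
An `L`-layer network with affine activation `σ x = a x + c` is applied to the
Sparsity Normalized input `h⁰_{SN,k} = h̃⁰ₖ · mₖ · K₁ / μm` (with `μm ≠ 0`).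
Layer `i` (for `0 ≤ i < L`) has weight matrix `W i` with integrable mean-`μw i`
entries and bias `b i` with integrable mean-`μb i` coordinates; features have
mean `μx`, masks mean `μm`, and all weights, biases, features and masks are
mutually independent.  Then every output coordinate `h L l` is integrable and
`E[h L l] = (f_L ∘ ⋯ ∘ f_1)(μx · K₁)` where `f_{i+1}(x) = σ (n i · μw i · x + μb i)`;
in particular the expected output does not depend on the mask mean `μm`. -/
theorem sparsity_normalization_removes_vsp
    {Ω : Type*} [MeasureSpace Ω] [IsProbabilityMeasure (ℙ : Measure Ω)]
    (L : ℕ) (hL : 1 ≤ L) (n : ℕ → ℕ) (hn : ∀ i ≤ L, 1 ≤ n i)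
    (σ : ℝ → ℝ) (a c : ℝ) (hσ : ∀ x, σ x = a * x + c)
    (W : (i : ℕ) → Fin (n (i + 1)) → Fin (n i) → Ω → ℝ)
    (b : (i : ℕ) → Fin (n (i + 1)) → Ω → ℝ)
    (ht m : Fin (n 0) → Ω → ℝ)
    (μw μb : ℕ → ℝ) (μx μm K₁ : ℝ) (hμm : μm ≠ 0)
    (hWint : ∀ i < L, ∀ (j : Fin (n (i + 1))) (k : Fin (n i)), Integrable (W i j k))
    (hWmean : ∀ i < L, ∀ (j : Fin (n (i + 1))) (k : Fin (n i)), ∫ ω, W i j k ω = μw i)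
    (hbint : ∀ i < L, ∀ (j : Fin (n (i + 1))), Integrable (b i j))
    (hbmean : ∀ i < L, ∀ (j : Fin (n (i + 1))), ∫ ω, b i j ω = μb i)
    (hhint : ∀ k, Integrable (ht k)) (hhmean : ∀ k, ∫ ω, ht k ω = μx)
    (hmint : ∀ k, Integrable (m k)) (hmmean : ∀ k, ∫ ω, m k ω = μm)
    (hindep : iIndepFun
      (Sum.elim
        (Sum.elim
          (fun p : Σ i : Fin L, Fin (n ((i : ℕ) + 1)) × Fin (n (i : ℕ)) =>
            W p.1 p.2.1 p.2.2)
          (fun p : Σ i : Fin L, Fin (n ((i : ℕ) + 1)) => b p.1 p.2))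
        (Sum.elim ht m)) ℙ)
    (h : (i : ℕ) → Fin (n i) → Ω → ℝ)
    (h0SN : ∀ (k : Fin (n 0)) (ω : Ω), h 0 k ω = ht k ω * m k ω * K₁ / μm)
    (hrec : ∀ i < L, ∀ (j : Fin (n (i + 1))) (ω : Ω),
      h (i + 1) j ω = σ (∑ k, W i j k ω * h i k ω + b i j ω)) :
    ∀ l : Fin (n L), Integrable (h L l) ∧
      ∫ ω, h L l ω = layerComp σ n μw μb L (μx * K₁) := by
  classical
  set F := (Sum.elim
        (Sum.elim
          (fun p : Σ i : Fin L, Fin (n ((i : ℕ) + 1)) × Fin (n (i : ℕ)) =>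
            W p.1 p.2.1 p.2.2)
          (fun p : Σ i : Fin L, Fin (n ((i : ℕ) + 1)) => b p.1 p.2))
        (Sum.elim ht m)) with hF
  have hFint : ∀ x, Integrable (F x) := by
    rintro (⟨⟨i, j, k⟩ | ⟨i, j⟩⟩ | (k | k))
    · exact hWint i i.isLt j k
    · exact hbint i i.isLt j
    · exact hhint k
    · exact hmint k
  set F' := fun x => ((hFint x).aestronglyMeasurable.mk (F x)) with hF'
  have hF'meas : ∀ x, Measurable (F' x) :=
    fun x => (hFint x).aestronglyMeasurable.stronglyMeasurable_mk.measurable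
  have hF'ae : ∀ x, F x =ᵐ[ℙ] F' x := fun x => (hFint x).aestronglyMeasurable.ae_eq_mk
  have hF'int : ∀ x, Integrable (F' x) := fun x => (hFint x).congr (hF'ae x)
  have hindep' : iIndepFun F' ℙ :=
    iIndepFun_congr_ae hindep hF'ae
  -- index sets used up to layer i
  set Sset : ℕ → Set ((((Σ i : Fin L, Fin (n ((i : ℕ) + 1)) × Fin (n (i : ℕ))) ⊕
      (Σ i : Fin L, Fin (n ((i : ℕ) + 1)))) ⊕ (Fin (n 0) ⊕ Fin (n 0)))) :=
    fun i => {x | match x with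
      | Sum.inl (Sum.inl p) => (p.1 : ℕ) < i
      | Sum.inl (Sum.inr p) => (p.1 : ℕ) < i
      | Sum.inr _ => True } with hSset
  have hSmono : ∀ i, Sset i ⊆ Sset (i + 1) := by
    rintro i (⟨p | p⟩ | p) hx
    · exact Nat.lt_succ_of_lt hx
    · exact Nat.lt_succ_of_lt hx
    · trivial
  set M : ℕ → MeasurableSpace Ω :=
    fun i => ⨆ x ∈ Sset i, MeasurableSpace.comap (F' x) inferInstance with hM
  have hMmono : ∀ i, M i ≤ M (i + 1) := by
    intro i
    exact biSup_mono (hSmono i)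
  have hmemmeas : ∀ i x, x ∈ Sset i → Measurable[M i] (F' x) := by
    intro i x hx
    exact Measurable.of_comap_le
      (le_biSup (fun x => MeasurableSpace.comap (F' x) inferInstance) hx)
  set h' := netAux σ L n μm K₁ F' with hh'
  -- main induction
  have key : ∀ i, i ≤ L → ∀ k : Fin (n i),
      Measurable[M i] (h' i k) ∧ Integrable (h' i k) ∧ (h' i k =ᵐ[ℙ] h i k) ∧
      ∫ ω, h' i k ω = layerComp σ n μw μb i (μx * K₁) := by
    intro i
    induction i with
    | zero =>
      intro _ k
      have hx1 : (Sum.inr (Sum.inl k) : (((Σ i : Fin L, Fin (n ((i : ℕ) + 1)) × Fin (n (i : ℕ))) ⊕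
          (Σ i : Fin L, Fin (n ((i : ℕ) + 1)))) ⊕ (Fin (n 0) ⊕ Fin (n 0)))) ∈ Sset 0 := trivial
      have hx2 : (Sum.inr (Sum.inr k) : (((Σ i : Fin L, Fin (n ((i : ℕ) + 1)) × Fin (n (i : ℕ))) ⊕
          (Σ i : Fin L, Fin (n ((i : ℕ) + 1)))) ⊕ (Fin (n 0) ⊕ Fin (n 0)))) ∈ Sset 0 := trivial
      have hdef : h' 0 k = fun ω =>
          F' (Sum.inr (Sum.inl k)) ω * F' (Sum.inr (Sum.inr k)) ω * K₁ / μm := rfl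
      have hind : IndepFun (F' (Sum.inr (Sum.inl k))) (F' (Sum.inr (Sum.inr k))) ℙ :=
        hindep'.indepFun (by simp)
      have hint2 : Integrable (F' (Sum.inr (Sum.inl k)) * F' (Sum.inr (Sum.inr k))) :=
        hind.integrable_mul (hF'int _) (hF'int _)
      refine ⟨?_, ?_, ?_, ?_⟩
      · rw [hdef]
        exact (((hmemmeas 0 _ hx1).mul (hmemmeas 0 _ hx2)).mul_const K₁).div_const μm
      · rw [hdef]
        exact (hint2.mul_const K₁).div_const μm
      · have ha1 : ∀ᵐ ω ∂ℙ, F' (Sum.inr (Sum.inl k)) ω = ht k ω := (hF'ae _).symm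
        have ha2 : ∀ᵐ ω ∂ℙ, F' (Sum.inr (Sum.inr k)) ω = m k ω := (hF'ae _).symm
        filter_upwards [ha1, ha2] with ω h1 h2
        show F' (Sum.inr (Sum.inl k)) ω * F' (Sum.inr (Sum.inr k)) ω * K₁ / μm = h 0 k ω
        rw [h0SN k ω, h1, h2]
      · rw [hdef]
        have hmul : ∫ ω, F' (Sum.inr (Sum.inl k)) ω * F' (Sum.inr (Sum.inr k)) ω
            = (∫ ω, F' (Sum.inr (Sum.inl k)) ω) * ∫ ω, F' (Sum.inr (Sum.inr k)) ω :=
          hind.integral_fun_mul_eq_mul_integral (hF'int _).aestronglyMeasurable (hF'int _).aestronglyMeasurable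
        have : ∫ ω, F' (Sum.inr (Sum.inl k)) ω * F' (Sum.inr (Sum.inr k)) ω * K₁ / μm
            = (∫ ω, F' (Sum.inr (Sum.inl k)) ω * F' (Sum.inr (Sum.inr k)) ω) * K₁ / μm := by
          rw [integral_div, integral_mul_const]
        rw [this, hmul]
        have e1 : ∫ ω, F' (Sum.inr (Sum.inl k)) ω = μx := by
          rw [← integral_congr_ae (hF'ae _)]; exact hhmean k
        have e2 : ∫ ω, F' (Sum.inr (Sum.inr k)) ω = μm := by
          rw [← integral_congr_ae (hF'ae _)]; exact hmmean k
        rw [e1, e2]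
        show μx * μm * K₁ / μm = layerComp σ n μw μb 0 (μx * K₁)
        simp only [layerComp]
        field_simp
    | succ i IH =>
      intro hiL j
      have hi : i < L := hiL
      have IH' := IH (le_of_lt hi)
      have hdef : h' (i + 1) j = fun ω =>
          σ (∑ k, F' (Sum.inl (Sum.inl ⟨⟨i, hi⟩, (j, k)⟩)) ω * h' i k ω
            + F' (Sum.inl (Sum.inr ⟨⟨i, hi⟩, j⟩)) ω) := by
        funext ω
        have hd : h' (i + 1) j ω = if hi : i < L then
            σ (∑ k, F' (Sum.inl (Sum.inl ⟨⟨i, hi⟩, (j, k)⟩)) ω * h' i k ω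
              + F' (Sum.inl (Sum.inr ⟨⟨i, hi⟩, j⟩)) ω)
          else 0 := rfl
        rw [hd, dif_pos hi]
      -- independence of each weight from h' i k
      have hWind : ∀ k : Fin (n i),
          IndepFun (F' (Sum.inl (Sum.inl ⟨⟨i, hi⟩, (j, k)⟩))) (h' i k) ℙ := by
        intro k
        refine indepFun_of_measurable_biSup hF'meas hindep' _ (Sset i) ?_ (IH' k).1
        exact fun hx => Nat.lt_irrefl i hx
      have hWh'int : ∀ k : Fin (n i),
          Integrable (fun ω => F' (Sum.inl (Sum.inl ⟨⟨i, hi⟩, (j, k)⟩)) ω * h' i k ω) := by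
        intro k
        exact (hWind k).integrable_mul (hF'int _) (IH' k).2.1
      have hsumint : Integrable (fun ω =>
          ∑ k, F' (Sum.inl (Sum.inl ⟨⟨i, hi⟩, (j, k)⟩)) ω * h' i k ω) :=
        integrable_finset_sum _ fun k _ => hWh'int k
      have hargint : Integrable (fun ω =>
          ∑ k, F' (Sum.inl (Sum.inl ⟨⟨i, hi⟩, (j, k)⟩)) ω * h' i k ω
            + F' (Sum.inl (Sum.inr ⟨⟨i, hi⟩, j⟩)) ω) :=
        hsumint.add (hF'int _)
      refine ⟨?_, ?_, ?_, ?_⟩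
      · -- measurability
        rw [hdef]
        have harg : Measurable[M (i + 1)] (fun ω =>
            ∑ k, F' (Sum.inl (Sum.inl ⟨⟨i, hi⟩, (j, k)⟩)) ω * h' i k ω
              + F' (Sum.inl (Sum.inr ⟨⟨i, hi⟩, j⟩)) ω) := by
          refine Measurable.add ?_ (hmemmeas (i + 1) _ (Nat.lt_succ_self i))
          refine Finset.measurable_sum _ fun k _ => ?_
          exact (hmemmeas (i + 1) _ (Nat.lt_succ_self i)).mul
            (Measurable.mono (IH' k).1 (hMmono i) le_rfl)
        have : (fun ω => σ (∑ k, F' (Sum.inl (Sum.inl ⟨⟨i, hi⟩, (j, k)⟩)) ω * h' i k ω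
            + F' (Sum.inl (Sum.inr ⟨⟨i, hi⟩, j⟩)) ω))
            = fun ω => a * (∑ k, F' (Sum.inl (Sum.inl ⟨⟨i, hi⟩, (j, k)⟩)) ω * h' i k ω
              + F' (Sum.inl (Sum.inr ⟨⟨i, hi⟩, j⟩)) ω) + c := by
          funext ω; rw [hσ]
        rw [this]
        exact (harg.const_mul a).add_const c
      · -- integrability
        rw [hdef]
        have : (fun ω => σ (∑ k, F' (Sum.inl (Sum.inl ⟨⟨i, hi⟩, (j, k)⟩)) ω * h' i k ω
            + F' (Sum.inl (Sum.inr ⟨⟨i, hi⟩, j⟩)) ω))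
            = fun ω => a * (∑ k, F' (Sum.inl (Sum.inl ⟨⟨i, hi⟩, (j, k)⟩)) ω * h' i k ω
              + F' (Sum.inl (Sum.inr ⟨⟨i, hi⟩, j⟩)) ω) + c := by
          funext ω; rw [hσ]
        rw [this]
        exact ((hargint.const_mul a).add (integrable_const c))
      · -- a.e. equality with h
        have haeW : ∀ᵐ ω ∂ℙ, ∀ k : Fin (n i),
            F' (Sum.inl (Sum.inl ⟨⟨i, hi⟩, (j, k)⟩)) ω = W i j k ω :=
          ae_all_iff.mpr fun k => (hF'ae (Sum.inl (Sum.inl ⟨⟨i, hi⟩, (j, k)⟩))).symm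
        have haeh : ∀ᵐ ω ∂ℙ, ∀ k : Fin (n i), h' i k ω = h i k ω :=
          ae_all_iff.mpr fun k => (IH' k).2.2.1
        have haeb : ∀ᵐ ω ∂ℙ, F' (Sum.inl (Sum.inr ⟨⟨i, hi⟩, j⟩)) ω = b i j ω :=
          (hF'ae (Sum.inl (Sum.inr ⟨⟨i, hi⟩, j⟩))).symm
        filter_upwards [haeW, haeh, haeb] with ω h1 h2 h3
        have hd := congrFun hdef ω
        rw [hd, hrec i hi j ω]
        have hsum : (∑ k, F' (Sum.inl (Sum.inl ⟨⟨i, hi⟩, (j, k)⟩)) ω * h' i k ω)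
            = ∑ k, W i j k ω * h i k ω :=
          Finset.sum_congr rfl fun k _ => by rw [h1 k, h2 k]
        rw [hsum, h3]
      · -- integral
        rw [hdef]
        have hrw : (fun ω => σ (∑ k, F' (Sum.inl (Sum.inl ⟨⟨i, hi⟩, (j, k)⟩)) ω * h' i k ω
            + F' (Sum.inl (Sum.inr ⟨⟨i, hi⟩, j⟩)) ω))
            = fun ω => a * (∑ k, F' (Sum.inl (Sum.inl ⟨⟨i, hi⟩, (j, k)⟩)) ω * h' i k ω
              + F' (Sum.inl (Sum.inr ⟨⟨i, hi⟩, j⟩)) ω) + c := by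
          funext ω; rw [hσ]
        rw [hrw]
        rw [integral_add ((hargint.const_mul a)) (integrable_const c),
          integral_const_mul, integral_add hsumint (hF'int _),
          integral_finset_sum _ fun k _ => hWh'int k]
        have eW : ∀ k : Fin (n i), ∫ ω, F' (Sum.inl (Sum.inl ⟨⟨i, hi⟩, (j, k)⟩)) ω = μw i := by
          intro k
          rw [← integral_congr_ae (hF'ae _)]; exact hWmean i hi j k
        have eb : ∫ ω, F' (Sum.inl (Sum.inr ⟨⟨i, hi⟩, j⟩)) ω = μb i := by
          rw [← integral_congr_ae (hF'ae _)]; exact hbmean i hi j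
        have eWh : ∀ k : Fin (n i),
            ∫ ω, F' (Sum.inl (Sum.inl ⟨⟨i, hi⟩, (j, k)⟩)) ω * h' i k ω
              = μw i * layerComp σ n μw μb i (μx * K₁) := by
          intro k
          have hmul : ∫ ω, F' (Sum.inl (Sum.inl ⟨⟨i, hi⟩, (j, k)⟩)) ω * h' i k ω
              = (∫ ω, F' (Sum.inl (Sum.inl ⟨⟨i, hi⟩, (j, k)⟩)) ω) * ∫ ω, h' i k ω :=
            (hWind k).integral_fun_mul_eq_mul_integral (hF'int _).aestronglyMeasurable (IH' k).2.1.aestronglyMeasurable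
          rw [hmul, eW k, (IH' k).2.2.2]
        rw [Finset.sum_congr rfl fun k _ => eWh k, eb, Finset.sum_const, Finset.card_univ,
          Fintype.card_fin]
        simp only [integral_const, measure_univ, ENNReal.toReal_one, probReal_univ, one_smul, smul_eq_mul,
          nsmul_eq_mul, one_mul]
        rw [show layerComp σ n μw μb (i + 1) (μx * K₁)
          = σ ((n i : ℝ) * μw i * layerComp σ n μw μb i (μx * K₁) + μb i) from rfl, hσ]
        ring
  intro l
  obtain ⟨_, hint, hae, hmean⟩ := key L le_rfl l
  exact ⟨hint.congr hae, by rw [← integral_congr_ae hae, hmean]⟩
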